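/- arXiv:2004.10029 — 5 statements merged into one kernel-verified Lean document; each statement's English description precedes it below -/
import Mathlib

section
/- The function x(t) = ((e² + 2e⁴ - 2e²t)e^{-t} - 8 + (17 - 2e²)e^t)/8 satisfies the ODE x'(t) = x(t) + 1 - 10·u(t-1) on (1,2], where u(t-1) = (e^{3-(t-1)} - e^{1-(t-1)}(t-1))/20, with initial condition x(1) = -1 + 2e. -/
theorem state_solves_ode_on_Ioc_1_2 :
    (∀ t ∈ Set.Ioc (1 : ℝ) 2,
      HasDerivAt
        (fun t : ℝ =>
          ((Real.exp 2 + 2 * Real.exp 4 - 2 * Real.exp 2 * t) * Real.exp (-t) - 8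
            + (17 - 2 * Real.exp 2) * Real.exp t) / 8)
        (((Real.exp 2 + 2 * Real.exp 4 - 2 * Real.exp 2 * t) * Real.exp (-t) - 8
            + (17 - 2 * Real.exp 2) * Real.exp t) / 8 + 1
          - 10 * ((Real.exp (3 - (t - 1)) - Real.exp (1 - (t - 1)) * (t - 1)) / 20)) t) ∧
    (((Real.exp 2 + 2 * Real.exp 4 - 2 * Real.exp 2 * 1) * Real.exp (-(1 : ℝ)) - 8
        + (17 - 2 * Real.exp 2) * Real.exp 1) / 8 = -1 + 2 * Real.exp 1) := by
  constructor
  · intro t _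
    have hne : Real.exp t ≠ 0 := (Real.exp_pos t).ne'
    have hexp : HasDerivAt (fun t : ℝ => Real.exp (-t)) (-Real.exp (-t)) t := by
      have h := (Real.hasDerivAt_exp (-t)).comp t (hasDerivAt_neg t)
      simp only [mul_neg, mul_one] at h
      exact h
    have h1 : HasDerivAt
        (fun t : ℝ =>
          ((Real.exp 2 + 2 * Real.exp 4 - 2 * Real.exp 2 * t) * Real.exp (-t) - 8
            + (17 - 2 * Real.exp 2) * Real.exp t) / 8)
        ((((0 - 2 * Real.exp 2 * 1) * Real.exp (-t)
            + (Real.exp 2 + 2 * Real.exp 4 - 2 * Real.exp 2 * t) * (-Real.exp (-t))) - 0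
            + (17 - 2 * Real.exp 2) * Real.exp t) / 8) t := by
      simpa using (((((hasDerivAt_const t (Real.exp 2 + 2 * Real.exp 4)).sub
        (((hasDerivAt_const t (2 * Real.exp 2)).mul (hasDerivAt_id t)))).mul hexp).sub
        (hasDerivAt_const t 8)).add
        ((hasDerivAt_const t (17 - 2 * Real.exp 2)).mul (Real.hasDerivAt_exp t))).div_const 8
    convert h1 using 1
    have e1 : Real.exp (3 - (t - 1)) = Real.exp 4 / Real.exp t := by
      rw [← Real.exp_sub]; ring_nf
    have e2 : Real.exp (1 - (t - 1)) = Real.exp 2 / Real.exp t := by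
      rw [← Real.exp_sub]; ring_nf
    have e3 : Real.exp (-t) = 1 / Real.exp t := by
      rw [Real.exp_neg]; exact inv_eq_one_div _
    rw [e1, e2, e3]
    field_simp
    ring
  · have h1 : Real.exp (-(1:ℝ)) = 1 / Real.exp 1 := by
      rw [Real.exp_neg]; exact inv_eq_one_div _
    have h2 : Real.exp 2 = Real.exp 1 * Real.exp 1 := by
      rw [← Real.exp_add]; norm_num
    have h4 : Real.exp 4 = Real.exp 2 * Real.exp 2 := by
      rw [← Real.exp_add]; norm_num
    have hne : Real.exp 1 ≠ 0 := (Real.exp_pos 1).ne'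
    rw [h1, h4, h2]
    field_simp
    ring
end

section
/- For the delayed problem with optimal state x* given piecewise by: x*(t)=1 on [-2,0], -1+2e^t on (0,1], ((e²+2e⁴-2e²t)e^{-t}-8+(17-2e²)e^t)/8 on (1,2], (2e^{4-t}+4+(-47e^{-2}+17-2e²+16e^{-2}t)e^t)/8 on (2,3], ((-e⁶+e⁴t)e^{-t}+4+(-51e^{-2}+24-2e²+17e^{-2}t-2t)e^t)/8 on (3,4], and optimal control u* given by 0 on [-1,0), (e^{3-t}-e^{1-t}t)/20 on [0,1), (e^{3-t}-1)/20 on [1,3], 0 on (3,4], the cost ∫₀⁴ (x*(t) + 100 u*(t)²) dt equals (23 + e² + 34e⁴ - 2e⁶)/16. -/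
theorem antideriv (a b A C D E F G H K : ℝ) :
    (∫ t in a..b, (A + (C + D * t) * Real.exp t + (E + F * t) * Real.exp (-t)
      + (G + H * t + K * t ^ 2) * Real.exp (-(2 * t))))
    = (A * b + (C - D + D * b) * Real.exp b + (-E - F - F * b) * Real.exp (-b)
        + ((-K - H - 2 * G) / 4 + (-K - H) / 2 * b + -K / 2 * b ^ 2) * Real.exp (-(2 * b)))
    - (A * a + (C - D + D * a) * Real.exp a + (-E - F - F * a) * Real.exp (-a)
        + ((-K - H - 2 * G) / 4 + (-K - H) / 2 * a + -K / 2 * a ^ 2) * Real.exp (-(2 * a))) := by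
  have hd : ∀ t ∈ Set.uIcc a b, HasDerivAt (fun s : ℝ =>
      A * s + (C - D + D * s) * Real.exp s + (-E - F - F * s) * Real.exp (-s)
        + ((-K - H - 2 * G) / 4 + (-K - H) / 2 * s + -K / 2 * s ^ 2) * Real.exp (-(2 * s)))
      (A + (C + D * t) * Real.exp t + (E + F * t) * Real.exp (-t)
        + (G + H * t + K * t ^ 2) * Real.exp (-(2 * t))) t := by
    intro t _
    have hexp : HasDerivAt Real.exp (Real.exp t) t := Real.hasDerivAt_exp t
    have hneg : HasDerivAt (fun s : ℝ => Real.exp (-s)) (-Real.exp (-t)) t := by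
      simpa [Function.comp_def] using (Real.hasDerivAt_exp (-t)).comp t ((hasDerivAt_id t).neg)
    have h2 : HasDerivAt (fun s : ℝ => Real.exp (-(2 * s))) (-2 * Real.exp (-(2 * t))) t := by
      have := (Real.hasDerivAt_exp (-(2 * t))).comp t (((hasDerivAt_id t).const_mul 2).neg)
      simpa [Function.comp_def] using this.congr_deriv (by ring)
    have hA : HasDerivAt (fun s : ℝ => A * s) A t := by
      simpa using (hasDerivAt_id t).const_mul A
    have p1 : HasDerivAt (fun s : ℝ => C - D + D * s) D t := by
      simpa using ((hasDerivAt_id t).const_mul D).const_add (C - D)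
    have p2 : HasDerivAt (fun s : ℝ => -E - F - F * s) (-F) t := by
      exact (((hasDerivAt_id' t).const_mul F).const_sub (-E - F)).congr_deriv (by ring)
    have p3 : HasDerivAt (fun s : ℝ => (-K - H - 2 * G) / 4 + (-K - H) / 2 * s + -K / 2 * s ^ 2)
        ((-K - H) / 2 + -K / 2 * (2 * t)) t := by
      have := (((hasDerivAt_id t).const_mul ((-K - H) / 2)).const_add ((-K - H - 2 * G) / 4)).add
        ((hasDerivAt_pow 2 t).const_mul (-K / 2))
      exact this.congr_deriv (by simp)
    have H := ((hA.add (p1.mul hexp)).add (p2.mul hneg)).add (p3.mul h2)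
    exact H.congr_deriv (by ring)
  have hint : IntervalIntegrable (fun t : ℝ => A + (C + D * t) * Real.exp t
      + (E + F * t) * Real.exp (-t) + (G + H * t + K * t ^ 2) * Real.exp (-(2 * t)))
      MeasureTheory.volume a b := by
    apply Continuous.intervalIntegrable
    fun_prop
  simpa using intervalIntegral.integral_eq_sub_of_hasDerivAt hd hint




set_option maxHeartbeats 3200000 in
open Real in
theorem minimal_cost_delayed_linear :
    (∫ t in (0:ℝ)..4,
      ((if t ≤ 0 then (1:ℝ)
        else if t ≤ 1 then -1 + 2 * exp t
        else if t ≤ 2 then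
          ((exp 2 + 2 * exp 4 - 2 * exp 2 * t) * exp (-t) - 8 + (17 - 2 * exp 2) * exp t) / 8
        else if t ≤ 3 then
          (2 * exp (4 - t) + 4
            + (-47 * exp (-2 : ℝ) + 17 - 2 * exp 2 + 16 * exp (-2 : ℝ) * t) * exp t) / 8
        else
          ((-exp 6 + exp 4 * t) * exp (-t) + 4
            + (-51 * exp (-2 : ℝ) + 24 - 2 * exp 2 + 17 * exp (-2 : ℝ) * t - 2 * t) * exp t) / 8)
      + 100 * (if t < 0 then (0:ℝ)
          else if t < 1 then (exp (3 - t) - exp (1 - t) * t) / 20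
          else if t ≤ 3 then (exp (3 - t) - 1) / 20
          else 0) ^ 2))
    = (23 + Real.exp 2 + 34 * Real.exp 4 - 2 * Real.exp 6) / 16 := by
  have hsub : ∀ a x : ℝ, Real.exp (a - x) = Real.exp a * Real.exp (-x) := fun a x => by rw [sub_eq_add_neg, Real.exp_add]
  have hX2 : ∀ x : ℝ, Real.exp (-(2 * x)) = Real.exp (-x) ^ 2 := fun x => by rw [show -(2*x) = -x + -x by ring, Real.exp_add, sq]
  have he2 : Real.exp 2 = Real.exp 1 ^ 2 := by rw [show (2:ℝ) = 1 + 1 by norm_num, Real.exp_add]; ring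
  have he3 : Real.exp 3 = Real.exp 1 ^ 3 := by rw [show (3:ℝ) = 1 + 1 + 1 by norm_num, Real.exp_add, Real.exp_add]; ring
  have he4 : Real.exp 4 = Real.exp 1 ^ 4 := by rw [show (4:ℝ) = 2 + 2 by norm_num, Real.exp_add, he2]; ring
  have he6 : Real.exp 6 = Real.exp 1 ^ 6 := by rw [show (6:ℝ) = 2 + 4 by norm_num, Real.exp_add, he2, he4]; ring
  have he8 : Real.exp 8 = Real.exp 1 ^ 8 := by rw [show (8:ℝ) = 4 + 4 by norm_num, Real.exp_add, he4]; ring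
  have hEq1 : Set.EqOn (fun t : ℝ => ((if t ≤ 0 then (1:ℝ)
        else if t ≤ 1 then -1 + 2 * exp t
        else if t ≤ 2 then
          ((exp 2 + 2 * exp 4 - 2 * exp 2 * t) * exp (-t) - 8 + (17 - 2 * exp 2) * exp t) / 8
        else if t ≤ 3 then
          (2 * exp (4 - t) + 4
            + (-47 * exp (-2 : ℝ) + 17 - 2 * exp 2 + 16 * exp (-2 : ℝ) * t) * exp t) / 8
        else
          ((-exp 6 + exp 4 * t) * exp (-t) + 4
            + (-51 * exp (-2 : ℝ) + 24 - 2 * exp 2 + 17 * exp (-2 : ℝ) * t - 2 * t) * exp t) / 8)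
      + 100 * (if t < 0 then (0:ℝ)
          else if t < 1 then (exp (3 - t) - exp (1 - t) * t) / 20
          else if t ≤ 3 then (exp (3 - t) - 1) / 20
          else 0) ^ 2)) (fun t : ℝ => (-1) + (2 + 0 * t) * Real.exp t + (0 + 0 * t) * Real.exp (-t) + ((Real.exp 6 / 4) + (-(Real.exp 4) / 2) * t + (Real.exp 2 / 4) * t ^ 2) * Real.exp (-(2 * t))) (Set.uIcc 0 1) := by
    intro t ht
    rw [Set.uIcc_of_le (by norm_num : (0:ℝ) ≤ 1), Set.mem_Icc] at ht
    obtain ⟨hta, htb⟩ := ht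
    beta_reduce
    rcases eq_or_lt_of_le hta with h0 | h0
    · subst h0
      norm_num
      simp only [Real.exp_zero, Real.exp_neg, hX2, he2, he3, he4, he6, he8]
      field_simp
      try simp only [he2, he3, he4, he6, he8]
      try ring
    · rcases eq_or_lt_of_le htb with h1 | h1
      · subst h1
        norm_num
        simp only [Real.exp_zero, Real.exp_neg, hX2, he2, he3, he4, he6, he8]
        field_simp
        try simp only [he2, he3, he4, he6, he8]
        try ring
      · rw [if_neg (by linarith : ¬ t ≤ 0), if_pos htb, if_neg (by linarith : ¬ t < 0), if_pos h1]
        simp only [hsub, hX2, he2, he3, he4, he6, he8]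
        ring
  have hEq2 : Set.EqOn (fun t : ℝ => ((if t ≤ 0 then (1:ℝ)
        else if t ≤ 1 then -1 + 2 * exp t
        else if t ≤ 2 then
          ((exp 2 + 2 * exp 4 - 2 * exp 2 * t) * exp (-t) - 8 + (17 - 2 * exp 2) * exp t) / 8
        else if t ≤ 3 then
          (2 * exp (4 - t) + 4
            + (-47 * exp (-2 : ℝ) + 17 - 2 * exp 2 + 16 * exp (-2 : ℝ) * t) * exp t) / 8
        else
          ((-exp 6 + exp 4 * t) * exp (-t) + 4
            + (-51 * exp (-2 : ℝ) + 24 - 2 * exp 2 + 17 * exp (-2 : ℝ) * t - 2 * t) * exp t) / 8)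
      + 100 * (if t < 0 then (0:ℝ)
          else if t < 1 then (exp (3 - t) - exp (1 - t) * t) / 20
          else if t ≤ 3 then (exp (3 - t) - 1) / 20
          else 0) ^ 2)) (fun t : ℝ => (-3/4) + (((17 - 2 * Real.exp 2) / 8) + 0 * t) * Real.exp t + (((Real.exp 2 + 2 * Real.exp 4) / 8 - Real.exp 3 / 2) + (-(Real.exp 2) / 4) * t) * Real.exp (-t) + ((Real.exp 6 / 4) + 0 * t + 0 * t ^ 2) * Real.exp (-(2 * t))) (Set.uIcc 1 2) := by
    intro t ht
    rw [Set.uIcc_of_le (by norm_num : (1:ℝ) ≤ 2), Set.mem_Icc] at ht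
    obtain ⟨hta, htb⟩ := ht
    beta_reduce
    rcases eq_or_lt_of_le hta with h0 | h0
    · subst h0
      norm_num
      simp only [Real.exp_zero, Real.exp_neg, hX2, he2, he3, he4, he6, he8]
      field_simp
      try simp only [he2, he3, he4, he6, he8]
      try ring
    · rw [if_neg (by linarith : ¬ t ≤ 0), if_neg (by linarith : ¬ t ≤ 1), if_pos (htb : t ≤ 2), if_neg (by linarith : ¬ t < 0), if_neg (by linarith : ¬ t < 1), if_pos (by linarith : t ≤ 3)]
      simp only [hsub, hX2, he2, he3, he4, he6, he8]
      ring
  have hEq3 : Set.EqOn (fun t : ℝ => ((if t ≤ 0 then (1:ℝ)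
        else if t ≤ 1 then -1 + 2 * exp t
        else if t ≤ 2 then
          ((exp 2 + 2 * exp 4 - 2 * exp 2 * t) * exp (-t) - 8 + (17 - 2 * exp 2) * exp t) / 8
        else if t ≤ 3 then
          (2 * exp (4 - t) + 4
            + (-47 * exp (-2 : ℝ) + 17 - 2 * exp 2 + 16 * exp (-2 : ℝ) * t) * exp t) / 8
        else
          ((-exp 6 + exp 4 * t) * exp (-t) + 4
            + (-51 * exp (-2 : ℝ) + 24 - 2 * exp 2 + 17 * exp (-2 : ℝ) * t - 2 * t) * exp t) / 8)
      + 100 * (if t < 0 then (0:ℝ)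
          else if t < 1 then (exp (3 - t) - exp (1 - t) * t) / 20
          else if t ≤ 3 then (exp (3 - t) - 1) / 20
          else 0) ^ 2)) (fun t : ℝ => (3/4) + (((-47 * Real.exp (-2 : ℝ) + 17 - 2 * Real.exp 2) / 8) + (2 * Real.exp (-2 : ℝ)) * t) * Real.exp t + ((Real.exp 4 / 4 - Real.exp 3 / 2) + 0 * t) * Real.exp (-t) + ((Real.exp 6 / 4) + 0 * t + 0 * t ^ 2) * Real.exp (-(2 * t))) (Set.uIcc 2 3) := by
    intro t ht
    rw [Set.uIcc_of_le (by norm_num : (2:ℝ) ≤ 3), Set.mem_Icc] at ht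
    obtain ⟨hta, htb⟩ := ht
    beta_reduce
    rcases eq_or_lt_of_le hta with h0 | h0
    · subst h0
      norm_num
      simp only [Real.exp_zero, Real.exp_neg, hX2, he2, he3, he4, he6, he8]
      field_simp
      try simp only [he2, he3, he4, he6, he8]
      try ring
    · rw [if_neg (by linarith : ¬ t ≤ 0), if_neg (by linarith : ¬ t ≤ 1), if_neg (by linarith : ¬ t ≤ 2), if_pos (htb : t ≤ 3), if_neg (by linarith : ¬ t < 0), if_neg (by linarith : ¬ t < 1), if_pos (by linarith : t ≤ 3)]
      simp only [hsub, hX2, he2, he3, he4, he6, he8]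
      ring
  have hEq4 : Set.EqOn (fun t : ℝ => ((if t ≤ 0 then (1:ℝ)
        else if t ≤ 1 then -1 + 2 * exp t
        else if t ≤ 2 then
          ((exp 2 + 2 * exp 4 - 2 * exp 2 * t) * exp (-t) - 8 + (17 - 2 * exp 2) * exp t) / 8
        else if t ≤ 3 then
          (2 * exp (4 - t) + 4
            + (-47 * exp (-2 : ℝ) + 17 - 2 * exp 2 + 16 * exp (-2 : ℝ) * t) * exp t) / 8
        else
          ((-exp 6 + exp 4 * t) * exp (-t) + 4
            + (-51 * exp (-2 : ℝ) + 24 - 2 * exp 2 + 17 * exp (-2 : ℝ) * t - 2 * t) * exp t) / 8)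
      + 100 * (if t < 0 then (0:ℝ)
          else if t < 1 then (exp (3 - t) - exp (1 - t) * t) / 20
          else if t ≤ 3 then (exp (3 - t) - 1) / 20
          else 0) ^ 2)) (fun t : ℝ => (1/2) + (((-51 * Real.exp (-2 : ℝ) + 24 - 2 * Real.exp 2) / 8) + ((17 * Real.exp (-2 : ℝ) - 2) / 8) * t) * Real.exp t + ((-(Real.exp 6) / 8) + (Real.exp 4 / 8) * t) * Real.exp (-t) + (0 + 0 * t + 0 * t ^ 2) * Real.exp (-(2 * t))) (Set.uIcc 3 4) := by
    intro t ht
    rw [Set.uIcc_of_le (by norm_num : (3:ℝ) ≤ 4), Set.mem_Icc] at ht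
    obtain ⟨hta, htb⟩ := ht
    beta_reduce
    rcases eq_or_lt_of_le hta with h0 | h0
    · subst h0
      norm_num
      simp only [Real.exp_zero, Real.exp_neg, hX2, he2, he3, he4, he6, he8]
      field_simp
      try simp only [he2, he3, he4, he6, he8]
      try ring
    · rw [if_neg (by linarith : ¬ t ≤ 0), if_neg (by linarith : ¬ t ≤ 1), if_neg (by linarith : ¬ t ≤ 2), if_neg (by linarith : ¬ t ≤ 3), if_neg (by linarith : ¬ t < 0), if_neg (by linarith : ¬ t < 1), if_neg (by linarith : ¬ t ≤ 3)]
      simp only [hsub, hX2, he2, he3, he4, he6, he8]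
      ring
  have hI1 : IntervalIntegrable (fun t : ℝ => ((if t ≤ 0 then (1:ℝ)
        else if t ≤ 1 then -1 + 2 * exp t
        else if t ≤ 2 then
          ((exp 2 + 2 * exp 4 - 2 * exp 2 * t) * exp (-t) - 8 + (17 - 2 * exp 2) * exp t) / 8
        else if t ≤ 3 then
          (2 * exp (4 - t) + 4
            + (-47 * exp (-2 : ℝ) + 17 - 2 * exp 2 + 16 * exp (-2 : ℝ) * t) * exp t) / 8
        else
          ((-exp 6 + exp 4 * t) * exp (-t) + 4
            + (-51 * exp (-2 : ℝ) + 24 - 2 * exp 2 + 17 * exp (-2 : ℝ) * t - 2 * t) * exp t) / 8)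
      + 100 * (if t < 0 then (0:ℝ)
          else if t < 1 then (exp (3 - t) - exp (1 - t) * t) / 20
          else if t ≤ 3 then (exp (3 - t) - 1) / 20
          else 0) ^ 2)) MeasureTheory.volume 0 1 :=
    (((by fun_prop : Continuous (fun t : ℝ => (-1) + (2 + 0 * t) * Real.exp t + (0 + 0 * t) * Real.exp (-t) + ((Real.exp 6 / 4) + (-(Real.exp 4) / 2) * t + (Real.exp 2 / 4) * t ^ 2) * Real.exp (-(2 * t)))).continuousOn).congr hEq1).intervalIntegrable
  have hI2 : IntervalIntegrable (fun t : ℝ => ((if t ≤ 0 then (1:ℝ)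
        else if t ≤ 1 then -1 + 2 * exp t
        else if t ≤ 2 then
          ((exp 2 + 2 * exp 4 - 2 * exp 2 * t) * exp (-t) - 8 + (17 - 2 * exp 2) * exp t) / 8
        else if t ≤ 3 then
          (2 * exp (4 - t) + 4
            + (-47 * exp (-2 : ℝ) + 17 - 2 * exp 2 + 16 * exp (-2 : ℝ) * t) * exp t) / 8
        else
          ((-exp 6 + exp 4 * t) * exp (-t) + 4
            + (-51 * exp (-2 : ℝ) + 24 - 2 * exp 2 + 17 * exp (-2 : ℝ) * t - 2 * t) * exp t) / 8)
      + 100 * (if t < 0 then (0:ℝ)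
          else if t < 1 then (exp (3 - t) - exp (1 - t) * t) / 20
          else if t ≤ 3 then (exp (3 - t) - 1) / 20
          else 0) ^ 2)) MeasureTheory.volume 1 2 :=
    (((by fun_prop : Continuous (fun t : ℝ => (-3/4) + (((17 - 2 * Real.exp 2) / 8) + 0 * t) * Real.exp t + (((Real.exp 2 + 2 * Real.exp 4) / 8 - Real.exp 3 / 2) + (-(Real.exp 2) / 4) * t) * Real.exp (-t) + ((Real.exp 6 / 4) + 0 * t + 0 * t ^ 2) * Real.exp (-(2 * t)))).continuousOn).congr hEq2).intervalIntegrable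
  have hI3 : IntervalIntegrable (fun t : ℝ => ((if t ≤ 0 then (1:ℝ)
        else if t ≤ 1 then -1 + 2 * exp t
        else if t ≤ 2 then
          ((exp 2 + 2 * exp 4 - 2 * exp 2 * t) * exp (-t) - 8 + (17 - 2 * exp 2) * exp t) / 8
        else if t ≤ 3 then
          (2 * exp (4 - t) + 4
            + (-47 * exp (-2 : ℝ) + 17 - 2 * exp 2 + 16 * exp (-2 : ℝ) * t) * exp t) / 8
        else
          ((-exp 6 + exp 4 * t) * exp (-t) + 4
            + (-51 * exp (-2 : ℝ) + 24 - 2 * exp 2 + 17 * exp (-2 : ℝ) * t - 2 * t) * exp t) / 8)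
      + 100 * (if t < 0 then (0:ℝ)
          else if t < 1 then (exp (3 - t) - exp (1 - t) * t) / 20
          else if t ≤ 3 then (exp (3 - t) - 1) / 20
          else 0) ^ 2)) MeasureTheory.volume 2 3 :=
    (((by fun_prop : Continuous (fun t : ℝ => (3/4) + (((-47 * Real.exp (-2 : ℝ) + 17 - 2 * Real.exp 2) / 8) + (2 * Real.exp (-2 : ℝ)) * t) * Real.exp t + ((Real.exp 4 / 4 - Real.exp 3 / 2) + 0 * t) * Real.exp (-t) + ((Real.exp 6 / 4) + 0 * t + 0 * t ^ 2) * Real.exp (-(2 * t)))).continuousOn).congr hEq3).intervalIntegrable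
  have hI4 : IntervalIntegrable (fun t : ℝ => ((if t ≤ 0 then (1:ℝ)
        else if t ≤ 1 then -1 + 2 * exp t
        else if t ≤ 2 then
          ((exp 2 + 2 * exp 4 - 2 * exp 2 * t) * exp (-t) - 8 + (17 - 2 * exp 2) * exp t) / 8
        else if t ≤ 3 then
          (2 * exp (4 - t) + 4
            + (-47 * exp (-2 : ℝ) + 17 - 2 * exp 2 + 16 * exp (-2 : ℝ) * t) * exp t) / 8
        else
          ((-exp 6 + exp 4 * t) * exp (-t) + 4
            + (-51 * exp (-2 : ℝ) + 24 - 2 * exp 2 + 17 * exp (-2 : ℝ) * t - 2 * t) * exp t) / 8)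
      + 100 * (if t < 0 then (0:ℝ)
          else if t < 1 then (exp (3 - t) - exp (1 - t) * t) / 20
          else if t ≤ 3 then (exp (3 - t) - 1) / 20
          else 0) ^ 2)) MeasureTheory.volume 3 4 :=
    (((by fun_prop : Continuous (fun t : ℝ => (1/2) + (((-51 * Real.exp (-2 : ℝ) + 24 - 2 * Real.exp 2) / 8) + ((17 * Real.exp (-2 : ℝ) - 2) / 8) * t) * Real.exp t + ((-(Real.exp 6) / 8) + (Real.exp 4 / 8) * t) * Real.exp (-t) + (0 + 0 * t + 0 * t ^ 2) * Real.exp (-(2 * t)))).continuousOn).congr hEq4).intervalIntegrable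
  rw [← intervalIntegral.integral_add_adjacent_intervals ((hI1.trans hI2).trans hI3) hI4,
      ← intervalIntegral.integral_add_adjacent_intervals (hI1.trans hI2) hI3,
      ← intervalIntegral.integral_add_adjacent_intervals hI1 hI2,
      intervalIntegral.integral_congr hEq1, intervalIntegral.integral_congr hEq2,
      intervalIntegral.integral_congr hEq3, intervalIntegral.integral_congr hEq4,
      antideriv, antideriv, antideriv, antideriv]
  norm_num
  simp only [Real.exp_zero, Real.exp_neg, he2, he3, he4, he6, he8]
  field_simp
  try simp only [he2, he3, he4, he6, he8]
  try ring
end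

section
/- For each t ∈ [1,2], S(t,x) = η₂(t)x + c₂(t) with η₂(t) = -(4e²/(e²+1)² + 2)t + 4(e²-1)/(e²+1)² + 6 + (e^{2t-2} - e^{6-2t})/(e²+1)² and c₂(t) = (2t(3e⁴+10e²+3) + 2(e^{6-2t} - e^{2t-2}) - 17e⁴ - 44e² - 7)/(2(e²+1)²) satisfies ∂₁S(t, x₂*(t)) - (x₂*(t)² + u₂*(t)²) + ∂₂S(t, x₂*(t))·x₁*(t-1)·u₀*(t-2) = 0, where x₂*(t) = 1, u₂*(t) = 0, x₁*(t-1) = 1, u₀*(t-2) = 0. -/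
open Real in
theorem HJ_equation_on_1_2
    (η₂ : ℝ → ℝ) (hη₂ : η₂ = fun t =>
      -(4 * exp 2 / (exp 2 + 1) ^ 2 + 2) * t + 4 * (exp 2 - 1) / (exp 2 + 1) ^ 2 + 6
        + (exp (2 * t - 2) - exp (6 - 2 * t)) / (exp 2 + 1) ^ 2)
    (c₂ : ℝ → ℝ) (hc₂ : c₂ = fun t =>
      (2 * t * (3 * exp 4 + 10 * exp 2 + 3) + 2 * (exp (6 - 2 * t) - exp (2 * t - 2))
        - 17 * exp 4 - 44 * exp 2 - 7) / (2 * (exp 2 + 1) ^ 2)) :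
    ∀ t ∈ Set.Icc (1 : ℝ) 2, ∃ D : ℝ,
      HasDerivAt (fun τ => η₂ τ * 1 + c₂ τ) D t ∧
      D - ((1 : ℝ) ^ 2 + (0 : ℝ) ^ 2) + η₂ t * 1 * 0 = 0 := by
  intro t ht
  subst hη₂ hc₂
  have h1 : HasDerivAt (fun τ : ℝ => 2 * τ - 2) 2 t := by
    simpa using ((hasDerivAt_id t).const_mul 2).sub_const 2
  have h2 : HasDerivAt (fun τ : ℝ => 6 - 2 * τ) (-2) t := by
    simpa using (hasDerivAt_const t (6:ℝ)).fun_sub ((hasDerivAt_id t).const_mul 2)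
  have e1 : HasDerivAt (fun τ : ℝ => exp (2 * τ - 2)) (exp (2 * t - 2) * 2) t :=
    (Real.hasDerivAt_exp _).comp t h1
  have e2 : HasDerivAt (fun τ : ℝ => exp (6 - 2 * τ)) (exp (6 - 2 * t) * (-2)) t :=
    (Real.hasDerivAt_exp _).comp t h2
  have hη : HasDerivAt (fun τ : ℝ =>
      -(4 * exp 2 / (exp 2 + 1) ^ 2 + 2) * τ + 4 * (exp 2 - 1) / (exp 2 + 1) ^ 2 + 6
        + (exp (2 * τ - 2) - exp (6 - 2 * τ)) / (exp 2 + 1) ^ 2)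
      (-(4 * exp 2 / (exp 2 + 1) ^ 2 + 2)
        + (exp (2 * t - 2) * 2 - exp (6 - 2 * t) * (-2)) / (exp 2 + 1) ^ 2) t := by
    have := ((((hasDerivAt_id t).const_mul (-(4 * exp 2 / (exp 2 + 1) ^ 2 + 2))).add_const
        (4 * (exp 2 - 1) / (exp 2 + 1) ^ 2)).add_const 6).fun_add ((e1.sub e2).div_const ((exp 2 + 1) ^ 2))
    simpa [mul_comm] using this
  have hc : HasDerivAt (fun τ : ℝ =>
      (2 * τ * (3 * exp 4 + 10 * exp 2 + 3) + 2 * (exp (6 - 2 * τ) - exp (2 * τ - 2))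
        - 17 * exp 4 - 44 * exp 2 - 7) / (2 * (exp 2 + 1) ^ 2))
      ((2 * (3 * exp 4 + 10 * exp 2 + 3) + 2 * (exp (6 - 2 * t) * (-2) - exp (2 * t - 2) * 2))
        / (2 * (exp 2 + 1) ^ 2)) t := by
    have hlin : HasDerivAt (fun τ : ℝ => 2 * τ * (3 * exp 4 + 10 * exp 2 + 3))
        (2 * (3 * exp 4 + 10 * exp 2 + 3)) t := by
      simpa [mul_assoc, mul_comm, mul_left_comm] using
        (hasDerivAt_id t).const_mul (2 * (3 * exp 4 + 10 * exp 2 + 3))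
    have := ((((hlin.add ((e2.sub e1).const_mul 2)).sub_const (17 * exp 4)).sub_const
        (44 * exp 2)).sub_const 7).div_const (2 * (exp 2 + 1) ^ 2)
    simpa using this
  refine ⟨_, (hη.mul_const 1).add hc, ?_⟩
  have hK : (exp 2 + 1) ^ 2 ≠ 0 := by positivity
  have h4 : exp 4 = exp 2 * exp 2 := by rw [← Real.exp_add]; norm_num
  field_simp
  ring_nf
  nlinarith [Real.exp_pos 2, Real.exp_pos (2*t-2), Real.exp_pos (6-2*t), h4]
end

section
/- For each t ∈ [0,1], S(t,x) = η₁(t)x + c₁(t) with η₁(t) = -2t + 5 + 2(e²-1)/(e²+1)² and c₁(t) = (2t(3e⁴+4e²+3) + e^{2t} - e^{4-2t} - 15e⁴ - 32e² - 9)/(2(e²+1)²) satisfies ∂₁S(t, 1) - (1 + u₁*(t)²) = 0, where u₁*(t) = (e^t - e^{2-t})/(e²+1). -/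
open Real in
theorem HJ_equation_on_0_1
    (η₁ : ℝ → ℝ) (hη₁ : η₁ = fun t => -2 * t + 5 + 2 * (exp 2 - 1) / (exp 2 + 1) ^ 2)
    (c₁ : ℝ → ℝ) (hc₁ : c₁ = fun t =>
      (2 * t * (3 * exp 4 + 4 * exp 2 + 3) + exp (2 * t) - exp (4 - 2 * t)
        - 15 * exp 4 - 32 * exp 2 - 9) / (2 * (exp 2 + 1) ^ 2))
    (u₁ : ℝ → ℝ) (hu₁ : u₁ = fun t => (exp t - exp (2 - t)) / (exp 2 + 1)) :
    ∀ t ∈ Set.Icc (0 : ℝ) 1, ∃ D : ℝ,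
      HasDerivAt (fun τ => η₁ τ * 1 + c₁ τ) D t ∧
      D - (1 + (u₁ t) ^ 2) = 0 := by
  subst hη₁ hc₁ hu₁
  intro t _
  refine ⟨-2 + (2 * (3 * exp 4 + 4 * exp 2 + 3) + 2 * exp (2 * t)
      + 2 * exp (4 - 2 * t)) / (2 * (exp 2 + 1) ^ 2), ?_, ?_⟩
  · have h1 : HasDerivAt (fun τ : ℝ => exp (2 * τ)) (2 * exp (2 * t)) t := by
      simpa [mul_comm] using ((hasDerivAt_id t).const_mul 2).exp
    have h2 : HasDerivAt (fun τ : ℝ => exp (4 - 2 * τ)) (-2 * exp (4 - 2 * t)) t := by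
      have : HasDerivAt (fun τ : ℝ => 4 - 2 * τ) (-2 : ℝ) t := by
        simpa using ((hasDerivAt_id t).const_mul 2).const_sub 4
      simpa [mul_comm] using this.exp
    have hlin : HasDerivAt (fun τ : ℝ => -2 * τ + 5 + 2 * (exp 2 - 1) / (exp 2 + 1) ^ 2)
        (-2 : ℝ) t := by
      simpa using (((hasDerivAt_id t).const_mul (-2 : ℝ)).add_const 5).add_const
        (2 * (exp 2 - 1) / (exp 2 + 1) ^ 2)
    have hnum : HasDerivAt (fun τ : ℝ => 2 * τ * (3 * exp 4 + 4 * exp 2 + 3) + exp (2 * τ)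
        - exp (4 - 2 * τ) - 15 * exp 4 - 32 * exp 2 - 9)
        (2 * (3 * exp 4 + 4 * exp 2 + 3) + 2 * exp (2 * t) + 2 * exp (4 - 2 * t)) t := by
      have hl : HasDerivAt (fun τ : ℝ => 2 * τ * (3 * exp 4 + 4 * exp 2 + 3))
          (2 * (3 * exp 4 + 4 * exp 2 + 3)) t := by
        simpa [mul_assoc] using ((hasDerivAt_id t).const_mul 2).mul_const
          (3 * exp 4 + 4 * exp 2 + 3)
      have := ((((hl.add h1).sub h2).sub_const (15 * exp 4)).sub_const
          (32 * exp 2)).sub_const 9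
      convert this using 1
      · rfl
      · rfl
      · rfl
      · ring
    convert hlin.add (hnum.div_const (2 * (exp 2 + 1) ^ 2)) using 1
    · rfl
    · rfl
    · funext τ; simp [Pi.add_apply]
  · have he : exp 2 + 1 > 0 := by positivity
    have h4 : exp 4 = exp 2 * exp 2 := by rw [← exp_add]; norm_num
    have h2t : exp (2 * t) = exp t * exp t := by rw [← exp_add]; ring_nf
    have h4t : exp (4 - 2 * t) = exp (2 - t) * exp (2 - t) := by rw [← exp_add]; ring_nf
    have hmix : exp t * exp (2 - t) = exp 2 := by rw [← exp_add]; ring_nf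
    field_simp
    nlinarith [he, h4, h2t, h4t, hmix, sq_nonneg (exp 2 + 1)]
end

section
/- The cost of the candidate pair for the delayed nonlinear problem equals ∫₀³ (x*(t)² + u*(t)²) dt = -S(0, 1) = -(η₁(0)·1 + c₁(0)), where η₁(0) = 5 + 2(e²-1)/(e²+1)² and c₁(0) = (1 - e⁴ - 15e⁴ - 32e² - 9)/(2(e²+1)²), with x*(t) = 1 on [0,2], x*(t) = (e^{t-2}+e^{4-t})/(e²+1) on [2,3], u*(t) = (e^t-e^{2-t})/(e²+1) on [0,1], and u*(t) = 0 on [1,3]. -/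
open Real intervalIntegral MeasureTheory in
theorem cost_equals_neg_S :
    (∫ t in (0:ℝ)..3,
      ((if t ≤ 2 then (1:ℝ) else (exp (t - 2) + exp (4 - t)) / (exp 2 + 1)) ^ 2
        + (if t ≤ 1 then (exp t - exp (2 - t)) / (exp 2 + 1) else (0:ℝ)) ^ 2))
    = -((5 + 2 * (exp 2 - 1) / (exp 2 + 1) ^ 2) * 1
        + (1 - exp 4 - 15 * exp 4 - 32 * exp 2 - 9) / (2 * (exp 2 + 1) ^ 2)) := by
  have hA : (exp 2 + 1) ≠ 0 := by positivity
  set f : ℝ → ℝ := fun t =>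
      ((if t ≤ 2 then (1:ℝ) else (exp (t - 2) + exp (4 - t)) / (exp 2 + 1)) ^ 2
        + (if t ≤ 1 then (exp t - exp (2 - t)) / (exp 2 + 1) else (0:ℝ)) ^ 2) with hf
  -- equality of f with smooth formulas on each subinterval
  have eq1 : ∀ t ∈ Set.uIoc (0:ℝ) 1,
      (1 + (exp (2*t) - 2*exp 2 + exp (4 - 2*t)) / (exp 2 + 1)^2) = f t := by
    intro t ht
    rw [Set.uIoc_of_le (by norm_num : (0:ℝ) ≤ 1)] at ht
    have h2 : t ≤ 2 := le_trans ht.2 (by norm_num)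
    simp only [hf, if_pos ht.2, if_pos h2]
    have a1 : exp (2*t) = exp t * exp t := by rw [← exp_add]; congr 1; ring
    have a2 : exp 2 = exp t * exp (2-t) := by rw [← exp_add]; congr 1; ring
    have a3 : exp (4-2*t) = exp (2-t) * exp (2-t) := by rw [← exp_add]; congr 1; ring
    rw [div_pow, a1, a2, a3]; ring
  have eq2 : ∀ t ∈ Set.uIoc (1:ℝ) 2, (1:ℝ) = f t := by
    intro t ht
    rw [Set.uIoc_of_le (by norm_num : (1:ℝ) ≤ 2)] at ht
    simp [hf, not_le.mpr ht.1, ht.2]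
  have eq3 : ∀ t ∈ Set.uIoc (2:ℝ) 3,
      ((exp (2*t - 4) + 2*exp 2 + exp (8 - 2*t)) / (exp 2 + 1)^2) = f t := by
    intro t ht
    rw [Set.uIoc_of_le (by norm_num : (2:ℝ) ≤ 3)] at ht
    have h1' : ¬ t ≤ 1 := by linarith [ht.1]
    simp only [hf, if_neg (not_le.mpr ht.1), if_neg h1']
    have a1 : exp (2*t-4) = exp (t-2) * exp (t-2) := by rw [← exp_add]; congr 1; ring
    have a2 : exp 2 = exp (t-2) * exp (4-t) := by rw [← exp_add]; congr 1; ring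
    have a3 : exp (8-2*t) = exp (4-t) * exp (4-t) := by rw [← exp_add]; congr 1; ring
    rw [div_pow, a1, a2, a3]; ring
  -- interval integrability of f on each subinterval
  have hi1 : IntervalIntegrable f volume 0 1 := by
    refine (Continuous.intervalIntegrable (by fun_prop) 0 1).congr
      (f := fun t => (1 + (exp (2*t) - 2*exp 2 + exp (4 - 2*t)) / (exp 2 + 1)^2)) ?_
    exact eq1
  have hi2 : IntervalIntegrable f volume 1 2 := by
    refine (Continuous.intervalIntegrable (by fun_prop) 1 2).congr (f := fun _ => (1:ℝ)) ?_
    exact eq2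
  have hi3 : IntervalIntegrable f volume 2 3 := by
    refine (Continuous.intervalIntegrable (by fun_prop) 2 3).congr
      (f := fun t => ((exp (2*t - 4) + 2*exp 2 + exp (8 - 2*t)) / (exp 2 + 1)^2)) ?_
    exact eq3
  -- rewrite each piece
  have h1 : (∫ t in (0:ℝ)..1, f t)
      = ∫ t in (0:ℝ)..1, (1 + (exp (2*t) - 2*exp 2 + exp (4 - 2*t)) / (exp 2 + 1)^2) := by
    refine (intervalIntegral.integral_congr_ae ?_).symm
    filter_upwards with t
    exact eq1 t
  have h2 : (∫ t in (1:ℝ)..2, f t) = ∫ t in (1:ℝ)..2, (1:ℝ) := by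
    refine (intervalIntegral.integral_congr_ae ?_).symm
    filter_upwards with t
    exact eq2 t
  have h3 : (∫ t in (2:ℝ)..3, f t)
      = ∫ t in (2:ℝ)..3, ((exp (2*t - 4) + 2*exp 2 + exp (8 - 2*t)) / (exp 2 + 1)^2) := by
    refine (intervalIntegral.integral_congr_ae ?_).symm
    filter_upwards with t
    exact eq3 t
  -- explicit antiderivative computations
  have e1 : (∫ t in (0:ℝ)..1, (1 + (exp (2*t) - 2*exp 2 + exp (4 - 2*t)) / (exp 2 + 1)^2))
      = (1 + (exp 2/2 - 2*exp 2*1 - exp 2/2)/(exp 2 + 1)^2)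
        - (0 + (1/2 - 0 - exp 4/2)/(exp 2 + 1)^2) := by
    have hd : ∀ t ∈ Set.uIcc (0:ℝ) 1, HasDerivAt
        (fun t => t + (exp (2*t)/2 - 2*exp 2*t - exp (4 - 2*t)/2)/(exp 2 + 1)^2)
        (1 + (exp (2*t) - 2*exp 2 + exp (4 - 2*t)) / (exp 2 + 1)^2) t := by
      intro t _
      have ha : HasDerivAt (fun t : ℝ => exp (2*t)) (2 * exp (2*t)) t := by
        simpa [mul_comm] using ((hasDerivAt_id t).const_mul 2).exp
      have hb : HasDerivAt (fun t : ℝ => exp (4 - 2*t)) (-2 * exp (4 - 2*t)) t := by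
        simpa [mul_comm] using (((hasDerivAt_id t).const_mul 2).const_sub 4).exp
      have := ((hasDerivAt_id t).add
        ((((ha.div_const 2).sub ((hasDerivAt_id t).const_mul (2*exp 2))).sub
          (hb.div_const 2)).div_const ((exp 2 + 1)^2)))
      exact this.congr_deriv (by ring)
    rw [integral_eq_sub_of_hasDerivAt hd (by apply Continuous.intervalIntegrable; fun_prop)]
    norm_num
  have e3 : (∫ t in (2:ℝ)..3, ((exp (2*t - 4) + 2*exp 2 + exp (8 - 2*t)) / (exp 2 + 1)^2))
      = ((exp 2/2 + 2*exp 2*3 - exp 2/2)/(exp 2 + 1)^2)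
        - ((1/2 + 2*exp 2*2 - exp 4/2)/(exp 2 + 1)^2) := by
    have hd : ∀ t ∈ Set.uIcc (2:ℝ) 3, HasDerivAt
        (fun t => (exp (2*t - 4)/2 + 2*exp 2*t - exp (8 - 2*t)/2)/(exp 2 + 1)^2)
        ((exp (2*t - 4) + 2*exp 2 + exp (8 - 2*t)) / (exp 2 + 1)^2) t := by
      intro t _
      have ha : HasDerivAt (fun t : ℝ => exp (2*t - 4)) (2 * exp (2*t - 4)) t := by
        simpa [mul_comm] using (((hasDerivAt_id t).const_mul 2).sub_const 4).exp
      have hb : HasDerivAt (fun t : ℝ => exp (8 - 2*t)) (-2 * exp (8 - 2*t)) t := by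
        simpa [mul_comm] using (((hasDerivAt_id t).const_mul 2).const_sub 8).exp
      have := ((((ha.div_const 2).add ((hasDerivAt_id t).const_mul (2*exp 2))).sub
          (hb.div_const 2)).div_const ((exp 2 + 1)^2))
      exact this.congr_deriv (by ring)
    rw [integral_eq_sub_of_hasDerivAt hd (by apply Continuous.intervalIntegrable; fun_prop)]
    norm_num
  have hsplit : (∫ t in (0:ℝ)..3, f t)
      = (∫ t in (0:ℝ)..1, f t) + (∫ t in (1:ℝ)..2, f t) + (∫ t in (2:ℝ)..3, f t) := by
    rw [integral_add_adjacent_intervals hi1 hi2,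
        integral_add_adjacent_intervals (hi1.trans hi2) hi3]
  have h4 : exp 4 = exp 2 * exp 2 := by rw [← exp_add]; norm_num
  rw [hsplit, h1, h2, h3, e1, e3, integral_one, h4]
  field_simp
  ring
end
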